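/- Let V: ℝ → ℝ be defined by V(x) = c for x < 1 and V(x) = c − (x−1)²/2 for x ≥ 1, where c is chosen so that ∫ e^{−V} dγ = 1. Then V'' ≥ −1, sup V < ∞, but the measure e^{−V} dγ has tails satisfying Pr(X ≥ x) ≥ C·e^{−x} for some C > 0 and all large x, and hence e^{−V} dγ is not the push-forward of γ under any Lipschitz map. -/

import Mathlib

open MeasureTheory ProbabilityTheory

open Real Set in
private lemma stmt18_aux_tail_int (r : ℝ) (hr : 0 < r) :
    ∫ y in Ioi r, Real.exp (-r*y) = r⁻¹ * Real.exp (-(r*r)) := by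
  have h := integral_comp_mul_left_Ioi (fun u => Real.exp (-u)) r hr
  simp only [smul_eq_mul, integral_exp_neg_Ioi] at h
  rw [← h]
  congr 1 with y
  rw [neg_mul]

open Real Set in
private lemma stmt18_gauss_Ici (r : ℝ) (hr : 1 ≤ r) :
    (gaussianReal 0 1) (Ici r) ≤ ENNReal.ofReal (Real.exp (-(r^2/2))) := by
  have hr0 : 0 < r := lt_of_lt_of_le one_pos hr
  rw [gaussianReal_apply_eq_integral 0 one_ne_zero]
  apply ENNReal.ofReal_le_ofReal
  rw [MeasureTheory.integral_Ici_eq_integral_Ioi]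
  have hint : ∫ y in Ioi r, gaussianPDFReal 0 1 y
      ≤ ∫ y in Ioi r, Real.exp (r^2/2) * Real.exp (-r*y) := by
    apply setIntegral_mono_on
      (integrable_gaussianPDFReal 0 1).restrict
      ((exp_neg_integrableOn_Ioi r hr0).const_mul _)
      measurableSet_Ioi
    intro y hy
    simp only [gaussianPDFReal, NNReal.coe_one, mul_one, sub_zero]
    rw [← Real.exp_add]
    have h1 : (√(2 * π))⁻¹ ≤ 1 := by
      rw [inv_le_one_iff₀]
      right
      rw [show (1:ℝ) = √1 by simp]
      exact Real.sqrt_le_sqrt (by nlinarith [Real.pi_gt_three])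
    have h2 : Real.exp (-y^2/(2:ℝ)) ≤ Real.exp (r^2/2 + -r*y) := by
      apply Real.exp_le_exp.2
      have hy' : r < y := hy
      nlinarith [sq_nonneg (y - r)]
    calc (√(2 * π))⁻¹ * rexp (-y ^ 2 / 2) ≤ 1 * rexp (r^2/2 + -r*y) :=
          mul_le_mul h1 h2 (Real.exp_nonneg _) one_pos.le
      _ = _ := one_mul _
  refine hint.trans ?_
  rw [integral_const_mul]
  have : ∫ y in Ioi r, Real.exp (-r*y) = r⁻¹ * Real.exp (-(r*r)) := stmt18_aux_tail_int r hr0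
  rw [this]
  have hinv : r⁻¹ ≤ 1 := by rw [inv_le_one_iff₀]; right; exact hr
  calc rexp (r ^ 2 / 2) * (r⁻¹ * rexp (-(r * r))) ≤ rexp (r^2/2) * (1 * rexp (-(r*r))) := by
        gcongr
    _ = rexp (r^2/2 + -(r*r)) := by rw [one_mul, ← Real.exp_add]
    _ ≤ rexp (-(r^2/2)) := by apply Real.exp_le_exp.2; nlinarith

open Real Set in
private lemma stmt18_gauss_Iic (r : ℝ) (hr : 1 ≤ r) :
    (gaussianReal 0 1) (Iic (-r)) ≤ ENNReal.ofReal (Real.exp (-(r^2/2))) := by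
  have key : (gaussianReal 0 1) (Iic (-r)) = (gaussianReal 0 1) (Ici r) := by
    rw [gaussianReal_apply_eq_integral 0 one_ne_zero, gaussianReal_apply_eq_integral 0 one_ne_zero]
    congr 1
    rw [MeasureTheory.integral_Ici_eq_integral_Ioi, ← integral_comp_neg_Ioi]
    congr 1 with y
    simp [gaussianPDFReal, neg_sq]
  rw [key]
  exact stmt18_gauss_Ici r hr

open Real Set in
private lemma stmt18_gauss_tail (r : ℝ) (hr : 1 ≤ r) :
    (gaussianReal 0 1) {y : ℝ | r ≤ |y|} ≤ ENNReal.ofReal (2 * Real.exp (-(r^2/2))) := by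
  have hsub : {y : ℝ | r ≤ |y|} ⊆ Ici r ∪ Iic (-r) := by
    intro y hy
    rcases abs_cases y with ⟨h1, _⟩ | ⟨h1, _⟩
    · left; simp only [mem_Ici]; simp only [mem_setOf_eq, h1] at hy; exact hy
    · right; simp only [mem_Iic]; simp only [mem_setOf_eq, h1] at hy; linarith
  calc (gaussianReal 0 1) {y : ℝ | r ≤ |y|} ≤ (gaussianReal 0 1) (Ici r ∪ Iic (-r)) :=
        measure_mono hsub
    _ ≤ (gaussianReal 0 1) (Ici r) + (gaussianReal 0 1) (Iic (-r)) := measure_union_le _ _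
    _ ≤ ENNReal.ofReal (Real.exp (-(r^2/2))) + ENNReal.ofReal (Real.exp (-(r^2/2))) := by
        gcongr
        · exact stmt18_gauss_Ici r hr
        · exact stmt18_gauss_Iic r hr
    _ = ENNReal.ofReal (2 * Real.exp (-(r^2/2))) := by
        rw [← ENNReal.ofReal_add (Real.exp_nonneg _) (Real.exp_nonneg _)]
        ring_nf

open Real Set in
private lemma stmt18_conv (c : ℝ) (V : ℝ → ℝ)
    (hV : ∀ x, V x = if x < 1 then c else c - (x - 1) ^ 2 / 2) :
    ConvexOn ℝ Set.univ (fun x => V x + x ^ 2 / 2) := by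
  refine ⟨convex_univ, ?_⟩
  intro x _ y _ a b ha hb hab
  simp only [smul_eq_mul]
  rw [hV x, hV y, hV (a*x+b*y)]
  have hb' : b = 1 - a := by linarith
  subst hb'
  rcases lt_or_ge (a*x+(1-a)*y) 1 with h1 | h1
  · rw [if_pos h1]
    rcases lt_or_ge x 1 with h2 | h2 <;> rcases lt_or_ge y 1 with h3 | h3
    · rw [if_pos h2, if_pos h3]
      nlinarith [mul_nonneg (mul_nonneg ha hb) (sq_nonneg (x-y))]
    · rw [if_pos h2, if_neg (not_lt.2 h3)]
      have key1 : (0:ℝ) ≤ a*(y-x) - (y-1) := by nlinarith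
      have key2 : (0:ℝ) ≤ a*(y-x) + (y-1) := by nlinarith
      nlinarith [mul_nonneg (mul_nonneg hb (mul_nonneg ha hb)) (sq_nonneg (x-y)),
        mul_nonneg hb (mul_nonneg key1 key2)]
    · rw [if_neg (not_lt.2 h2), if_pos h3]
      have key1 : (0:ℝ) ≤ (1-a)*(x-y) - (x-1) := by nlinarith
      have key2 : (0:ℝ) ≤ (1-a)*(x-y) + (x-1) := by nlinarith
      nlinarith [mul_nonneg (mul_nonneg ha (mul_nonneg ha hb)) (sq_nonneg (x-y)),
        mul_nonneg ha (mul_nonneg key1 key2)]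
    · exfalso
      nlinarith [mul_nonneg ha (by linarith : (0:ℝ) ≤ x - 1),
        mul_nonneg hb (by linarith : (0:ℝ) ≤ y - 1)]
  · rw [if_neg (not_lt.2 h1)]
    rcases lt_or_ge x 1 with h2 | h2 <;> rcases lt_or_ge y 1 with h3 | h3 <;>
      [rw [if_pos h2, if_pos h3]; rw [if_pos h2, if_neg (not_lt.2 h3)];
       rw [if_neg (not_lt.2 h2), if_pos h3]; rw [if_neg (not_lt.2 h2), if_neg (not_lt.2 h3)]] <;>
      nlinarith [mul_nonneg ha (sq_nonneg (x-1)), mul_nonneg hb (sq_nonneg (y-1))]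

open Real Set in
private lemma stmt18_tail (c : ℝ) (V : ℝ → ℝ)
    (hV : ∀ x, V x = if x < 1 then c else c - (x - 1) ^ 2 / 2)
    (μ : Measure ℝ)
    (hμ : μ = (gaussianReal 0 1).withDensity (fun x => ENNReal.ofReal (Real.exp (-V x)))) :
    ∀ x ≥ (1:ℝ), ENNReal.ofReal ((√(2 * π))⁻¹ * Real.exp (1/2 - c) * Real.exp (-x))
      ≤ μ (Set.Ici x) := by
  intro x hx
  have hVm : Measurable V := by
    have hVe : V = fun x => if x < 1 then c else c - (x - 1) ^ 2 / 2 := funext hV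
    rw [hVe]
    exact Measurable.ite (measurableSet_lt measurable_id measurable_const) measurable_const
      (by fun_prop)
  have hfm : Measurable (fun y : ℝ => ENNReal.ofReal (Real.exp (-V y))) :=
    (Real.measurable_exp.comp hVm.neg).ennreal_ofReal
  set C0 : ℝ := (√(2 * π))⁻¹ * Real.exp (1/2 - c) with hC0
  have hC0pos : 0 < C0 := by positivity
  rw [hμ, withDensity_apply _ measurableSet_Ici, gaussianReal_of_var_ne_zero 0 one_ne_zero,
    restrict_withDensity measurableSet_Ici,
    lintegral_withDensity_eq_lintegral_mul _ (measurable_gaussianPDF 0 1) hfm]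
  have hcong : ∀ y ∈ Set.Ici x,
      gaussianPDF 0 1 y * ENNReal.ofReal (Real.exp (-V y))
        = ENNReal.ofReal (C0 * Real.exp (-y)) := by
    intro y hy
    have hy1 : (1:ℝ) ≤ y := le_trans hx hy
    rw [hV y, if_neg (not_lt.2 hy1)]
    rw [gaussianPDF, ← ENNReal.ofReal_mul (gaussianPDFReal_nonneg 0 1 y)]
    congr 1
    simp only [gaussianPDFReal, NNReal.coe_one, mul_one, sub_zero]
    rw [mul_assoc, ← Real.exp_add, hC0, mul_assoc, ← Real.exp_add]
    congr 1
    ring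
  simp only [Pi.mul_apply]
  rw [setLIntegral_congr_fun measurableSet_Ici hcong]
  rw [← MeasureTheory.ofReal_integral_eq_lintegral_ofReal]
  · apply ENNReal.ofReal_le_ofReal
    rw [MeasureTheory.integral_Ici_eq_integral_Ioi, integral_const_mul, integral_exp_neg_Ioi]
  · have h1 : IntegrableOn (fun y => Real.exp (-y)) (Set.Ioi x) :=
      (exp_neg_integrableOn_Ioi x one_pos).congr_fun
        (fun y _ => by simp only [neg_one_mul]) measurableSet_Ioi
    have h2 : IntegrableOn (fun y => Real.exp (-y)) (Set.Ici x) :=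
      (integrableOn_Ici_iff_integrableOn_Ioi (by simp)).2 h1
    exact h2.const_mul C0
  · exact MeasureTheory.ae_of_all _ fun y => by positivity

/-- the potential `V(x) = c` for `x < 1`, `V(x) = c - (x-1)²/2` for
`x ≥ 1` (with `c` normalizing `e^{-V} dγ` to a probability measure) satisfies
`V'' ≥ -1` and `sup V < ∞`, but `e^{-V} dγ` has tails `≥ C e^{-x}`, hence it is not
the push-forward of `γ` under any Lipschitz map. -/
theorem stmt_18 (c : ℝ) (V : ℝ → ℝ)
    (hV : ∀ x, V x = if x < 1 then c else c - (x - 1) ^ 2 / 2)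
    (hnorm : ∫ x, Real.exp (-V x) ∂(gaussianReal 0 1) = 1)
    (μ : Measure ℝ)
    (hμ : μ = (gaussianReal 0 1).withDensity (fun x => ENNReal.ofReal (Real.exp (-V x)))) :
    ConvexOn ℝ Set.univ (fun x => V x + x ^ 2 / 2) ∧
    BddAbove (Set.range V) ∧
    (∃ C > 0, ∃ x₀ : ℝ, ∀ x ≥ x₀, ENNReal.ofReal (C * Real.exp (-x)) ≤ μ (Set.Ici x)) ∧
    ¬ ∃ (L : NNReal) (T : ℝ → ℝ), LipschitzWith L T ∧ (gaussianReal 0 1).map T = μ := by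
  set C0 : ℝ := (Real.sqrt (2 * Real.pi))⁻¹ * Real.exp (1/2 - c) with hC0
  have hC0pos : 0 < C0 := by positivity
  have htail := stmt18_tail c V hV μ hμ
  refine ⟨stmt18_conv c V hV, ?_, ⟨C0, hC0pos, 1, htail⟩, ?_⟩
  · refine ⟨c, ?_⟩
    rintro v ⟨x, rfl⟩
    rw [hV x]
    split_ifs with h
    · exact le_refl c
    · nlinarith [sq_nonneg (x-1)]
  · rintro ⟨L, T, hT, hmap⟩
    set K : NNReal := L + 1 with hK
    have hTK : LipschitzWith K T := hT.weaken (by simp [hK])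
    have hK1 : (1:ℝ) ≤ (K : ℝ) := by
      simp only [hK, NNReal.coe_add, NNReal.coe_one]
      linarith [L.coe_nonneg]
    have hKpos : (0:ℝ) < (K : ℝ) := lt_of_lt_of_le one_pos hK1
    set a : ℝ := T 0 with ha
    set B : ℝ := Real.log 2 - Real.log C0 + a with hB
    set s : ℝ := max 1 (max (4*(K:ℝ)) (max (4*|B|+4) (1 - a))) with hs
    have hs1 : 1 ≤ s := le_max_left _ _
    have hsK : 4*(K:ℝ) ≤ s := le_trans (le_max_left _ _) (le_max_right _ _)
    have hsB : 4*|B|+4 ≤ s :=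
      le_trans (le_trans (le_max_left _ _) (le_max_right _ _)) (le_max_right _ _)
    have hsa : 1 - a ≤ s :=
      le_trans (le_trans (le_max_right _ _) (le_max_right _ _)) (le_max_right _ _)
    set x : ℝ := a + (K:ℝ) * s with hx
    have hx1 : (1:ℝ) ≤ x := by
      have : s ≤ (K:ℝ) * s := by nlinarith
      rw [hx]; linarith
    have hlow := htail x hx1
    have hmeasT : Measurable T := hTK.continuous.measurable
    have hpre : T ⁻¹' (Set.Ici x) ⊆ {y : ℝ | s ≤ |y|} := by
      intro y hy
      simp only [Set.mem_preimage, Set.mem_Ici] at hy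
      simp only [Set.mem_setOf_eq]
      have hd : dist (T y) (T 0) ≤ (K:ℝ) * dist y 0 := hTK.dist_le_mul y 0
      have h1 : (K:ℝ) * s ≤ T y - T 0 := by rw [← ha]; linarith [hx ▸ hy]
      have h2 : T y - T 0 ≤ |T y - T 0| := le_abs_self _
      have h3 : |T y - T 0| = dist (T y) (T 0) := (Real.dist_eq _ _).symm
      have h4 : dist y 0 = |y| := by rw [Real.dist_eq, sub_zero]
      have : (K:ℝ) * s ≤ (K:ℝ) * |y| := by rw [← h4]; linarith
      exact le_of_mul_le_mul_left this hKpos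
    have hup : μ (Set.Ici x) ≤ ENNReal.ofReal (2 * Real.exp (-(s^2/2))) := by
      rw [← hmap, Measure.map_apply hmeasT measurableSet_Ici]
      exact le_trans (measure_mono hpre) (stmt18_gauss_tail s hs1)
    have hreal : C0 * Real.exp (-x) ≤ 2 * Real.exp (-(s^2/2)) := by
      rw [← ENNReal.ofReal_le_ofReal_iff (by positivity)]
      exact le_trans hlow hup
    have hcontra : 2 * Real.exp (-(s^2/2)) < C0 * Real.exp (-x) := by
      have h2e : 2 * Real.exp (-(s^2/2)) = Real.exp (Real.log 2 + -(s^2/2)) := by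
        rw [Real.exp_add, Real.exp_log two_pos]
      have hce : C0 * Real.exp (-x) = Real.exp (Real.log C0 + -x) := by
        rw [Real.exp_add, Real.exp_log hC0pos]
      rw [h2e, hce]
      apply Real.exp_lt_exp.2
      have habs1 : B ≤ |B| := le_abs_self B
      have habs0 : (0:ℝ) ≤ |B| := abs_nonneg B
      have hKs : (K:ℝ) * s ≤ s^2/4 := by nlinarith
      have hB4 : s^2/4 ≥ s*(|B|+1) := by nlinarith
      have : s^2/2 - (K:ℝ)*s > B := by nlinarith
      rw [hx, hB] at *
      linarith [this]
    linarith
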